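/- arXiv:1603.05727 — 2 statements merged into one kernel-verified Lean document; each statement's English description precedes it below -/
import Mathlib

section
/- Let n ≥ 1 and let h solve h'' + ((n-1)/ρ)h' - h = 0 on (0,∞) with h(0)=1, h'(0)=0. Define j(ρ) = (2-n) ρ^{n-1} h'(ρ) h(ρ) + ρ^n (h(ρ)² - h'(ρ)²). Then j'(ρ) = 2 ρ^{n-1} h(ρ)² for all ρ > 0. -/
/-- With `h` solving `h'' + ((n-1)/ρ)h' - h = 0`, `h(0)=1`, `h'(0)=0`,
the function `j(ρ) = (2-n)ρ^{n-1}h'(ρ)h(ρ) + ρ^n (h(ρ)² - h'(ρ)²)` satisfies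
`j'(ρ) = 2 ρ^{n-1} h(ρ)²` for all `ρ > 0`. -/
theorem stmt_4 (n : ℕ) (hn : 1 ≤ n) (h : ℝ → ℝ) (hsm : ContDiff ℝ 2 h)
    (hode : ∀ ρ : ℝ, 0 < ρ →
      deriv (deriv h) ρ + ((n - 1 : ℝ) / ρ) * deriv h ρ - h ρ = 0)
    (h0 : h 0 = 1) (h0' : deriv h 0 = 0) :
    ∀ ρ : ℝ, 0 < ρ →
      deriv (fun ρ : ℝ =>
          (2 - n : ℝ) * ρ ^ (n - 1) * deriv h ρ * h ρ
            + ρ ^ n * ((h ρ) ^ 2 - (deriv h ρ) ^ 2)) ρ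
        = 2 * ρ ^ (n - 1) * (h ρ) ^ 2 := by
  obtain ⟨m, rfl⟩ : ∃ m, n = m + 1 := ⟨n - 1, (Nat.succ_pred_eq_of_pos hn).symm⟩
  intro ρ hρ
  have hρ0 : ρ ≠ 0 := ne_of_gt hρ
  have hdiff : Differentiable ℝ h := hsm.differentiable (by norm_num)
  have hd1 : ContDiff ℝ 1 (deriv h) := by
    have := (contDiff_succ_iff_deriv (n := 1)).1 (by exact_mod_cast hsm)
    exact this.2.2
  have Hh : HasDerivAt h (deriv h ρ) ρ := (hdiff ρ).hasDerivAt
  have Hh' : HasDerivAt (deriv h) (deriv (deriv h) ρ) ρ :=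
    ((hd1.differentiable one_ne_zero) ρ).hasDerivAt
  set a := h ρ
  set b := deriv h ρ
  set c := deriv (deriv h) ρ with hc
  have hcv : c = a - ((m : ℝ) / ρ) * b := by
    have := hode ρ hρ
    push_cast at this
    rw [show ((m : ℝ) + 1 - 1) = (m : ℝ) by ring] at this
    linarith
  have H1 : HasDerivAt (fun ρ : ℝ => (2 - ((m : ℝ) + 1)) * ρ ^ m * deriv h ρ * h ρ)
      (((2 - ((m : ℝ) + 1)) * ((m : ℝ) * ρ ^ (m - 1)) * b * a)
        + ((2 - ((m : ℝ) + 1)) * ρ ^ m * c * a)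
        + ((2 - ((m : ℝ) + 1)) * ρ ^ m * b * b)) ρ := by
    have := (((hasDerivAt_pow m ρ).const_mul (2 - ((m : ℝ) + 1))).fun_mul Hh').fun_mul Hh
    refine this.congr_deriv ?_
    ring
  have H2 : HasDerivAt (fun ρ : ℝ => ρ ^ (m + 1) * ((h ρ) ^ 2 - (deriv h ρ) ^ 2))
      (((m : ℝ) + 1) * ρ ^ m * (a ^ 2 - b ^ 2)
        + ρ ^ (m + 1) * (2 * a * b - 2 * b * c)) ρ := by
    have hsq : HasDerivAt (fun ρ : ℝ => (h ρ) ^ 2 - (deriv h ρ) ^ 2)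
        (2 * a * b - 2 * b * c) ρ := by
      have := (Hh.fun_pow 2).fun_sub (Hh'.fun_pow 2)
      refine this.congr_deriv ?_
      ring
    have := (hasDerivAt_pow (m + 1) ρ).fun_mul hsq
    refine this.congr_deriv ?_
    push_cast
    ring
  have H := (H1.fun_add H2).deriv
  simp only [Nat.add_sub_cancel]
  push_cast
  rw [H, hcv]
  rcases Nat.eq_zero_or_pos m with hm | hm
  · subst hm; field_simp; ring
  · obtain ⟨k, rfl⟩ : ∃ k, m = k + 1 := ⟨m - 1, (Nat.succ_pred_eq_of_pos hm).symm⟩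
    simp only [Nat.add_sub_cancel]
    push_cast
    field_simp
    ring
end

section
/- Let n ≥ 1 and let h solve h'' + ((n-1)/ρ)h' - h = 0 on (0,∞) with h(0)=1, h'(0)=0, and assume h > 0 on [0,∞). Then the function σ(ρ) = (1/n)(ρ h'(ρ)/h(ρ) - 1) is strictly increasing on (0,∞). -/
open Filter Set Topology

/-- With `h` solving `h'' + ((n-1)/ρ)h' - h = 0`, `h(0)=1`, `h'(0)=0`,
and `h > 0` on `[0,∞)`, the function `σ(ρ) = (1/n)(ρ h'(ρ)/h(ρ) - 1)` is strictly
increasing on `(0,∞)`. -/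
theorem stmt_5 (n : ℕ) (hn : 1 ≤ n) (h : ℝ → ℝ) (hsm : ContDiff ℝ 2 h)
    (hode : ∀ ρ : ℝ, 0 < ρ →
      deriv (deriv h) ρ + ((n - 1 : ℝ) / ρ) * deriv h ρ - h ρ = 0)
    (h0 : h 0 = 1) (h0' : deriv h 0 = 0)
    (hpos : ∀ ρ : ℝ, 0 ≤ ρ → 0 < h ρ) :
    StrictMonoOn (fun ρ : ℝ => (1 / (n : ℝ)) * (ρ * deriv h ρ / h ρ - 1))
      (Set.Ioi (0 : ℝ)) := by
  have hn0 : (0:ℝ) < n := by exact_mod_cast Nat.lt_of_lt_of_le Nat.zero_lt_one hn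
  have hd : Differentiable ℝ h := hsm.differentiable (by norm_num)
  have hc1 : ContDiff ℝ 1 (deriv h) := by
    have : ContDiff ℝ ((1:ℕ)+1) h := by exact_mod_cast hsm
    exact (contDiff_succ_iff_deriv.mp this).2.2
  have hd1 : Differentiable ℝ (deriv h) := hc1.differentiable one_ne_zero
  set h1 := deriv h with hh1def
  have hode2 : ∀ ρ : ℝ, 0 < ρ → deriv h1 ρ = h ρ - ((n:ℝ)-1)/ρ * h1 ρ := by
    intro ρ hρ; have := hode ρ hρ; linarith
  set g : ℝ → ℝ := fun ρ => h1 ρ / h ρ with hgdef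
  set P : ℝ → ℝ := fun ρ => ρ - ((n:ℝ)-2) * g ρ - ρ * (g ρ)^2 with hPdef
  have hne : ∀ ρ : ℝ, 0 < ρ → h ρ ≠ 0 := fun ρ hρ => ne_of_gt (hpos ρ hρ.le)
  -- derivative of g
  have hgder : ∀ ρ : ℝ, 0 < ρ →
      HasDerivAt g ((deriv h1 ρ * h ρ - h1 ρ * h1 ρ) / (h ρ)^2) ρ := by
    intro ρ hρ
    exact ((hd1 ρ).hasDerivAt).div ((hd ρ).hasDerivAt) (hne ρ hρ)
  -- derivative of P
  have hPder : ∀ ρ : ℝ, 0 < ρ →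
      HasDerivAt P (1 - ((n:ℝ)-2) * ((deriv h1 ρ * h ρ - h1 ρ * h1 ρ) / (h ρ)^2)
        - ((g ρ)^2 + ρ * (2 * g ρ * ((deriv h1 ρ * h ρ - h1 ρ * h1 ρ) / (h ρ)^2)))) ρ := by
    intro ρ hρ
    have H1 := (hgder ρ hρ).const_mul ((n:ℝ)-2)
    have H2 := (hasDerivAt_id ρ).mul ((hgder ρ hρ).pow 2)
    have := ((hasDerivAt_id ρ).sub H1).sub H2
    refine this.congr_deriv ?_
    simp
  -- derivative of σ
  have hσder : ∀ ρ : ℝ, 0 < ρ →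
      HasDerivAt (fun ρ : ℝ => (1 / (n : ℝ)) * (ρ * h1 ρ / h ρ - 1))
        ((1/(n:ℝ)) * P ρ) ρ := by
    intro ρ hρ
    have hnum : HasDerivAt (fun ρ => ρ * h1 ρ) (1 * h1 ρ + ρ * deriv h1 ρ) ρ :=
      (hasDerivAt_id ρ).mul ((hd1 ρ).hasDerivAt)
    have hq := (hnum.div ((hd ρ).hasDerivAt) (hne ρ hρ)).sub_const 1
    have := hq.const_mul (1/(n:ℝ))
    refine this.congr_deriv ?_
    rw [hPdef]
    have hH := hne ρ hρ
    simp only [hgdef]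
    rw [hode2 ρ hρ]
    field_simp
    ring
  -- quotient identity
  have hGid : ∀ ρ : ℝ, 0 < ρ →
      (deriv h1 ρ * h ρ - h1 ρ * h1 ρ) / (h ρ)^2 = 1 - ((n:ℝ)-1)/ρ * g ρ - (g ρ)^2 := by
    intro ρ hρ
    have hH := hne ρ hρ
    have hρ' : ρ ≠ 0 := ne_of_gt hρ
    rw [hode2 ρ hρ]
    simp only [hgdef]
    field_simp
  -- P has derivative 2 at its zeros
  have hPzero : ∀ ρ : ℝ, 0 < ρ → P ρ = 0 → HasDerivAt P 2 ρ := by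
    intro ρ hρ hP0
    have := hPder ρ hρ
    rw [hGid ρ hρ] at this
    set x := g ρ with hxdef
    have hx : ρ - ((n:ℝ)-2) * x - ρ * x^2 = 0 := hP0
    have hρ' : ρ ≠ 0 := ne_of_gt hρ
    have heq : 1 - ((n:ℝ)-2) * (1 - ((n:ℝ)-1)/ρ * x - x^2)
        - (x^2 + ρ * (2 * x * (1 - ((n:ℝ)-1)/ρ * x - x^2))) = 2 := by
      field_simp
      linear_combination (-((n:ℝ)-1) - 2*ρ*x) * hx
    rwa [heq] at this
  -- limit h1 ρ / ρ → deriv h1 0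
  have t1 : Tendsto (fun ρ => h1 ρ / ρ) (𝓝[>] (0:ℝ)) (𝓝 (deriv h1 0)) := by
    have := (hd1 0).hasDerivAt
    rw [hasDerivAt_iff_tendsto_slope] at this
    have h2' := this.mono_left (nhdsWithin_mono _ (fun x (hx : x ∈ Ioi (0:ℝ)) => ne_of_gt hx))
    refine h2'.congr' ?_
    filter_upwards [self_mem_nhdsWithin] with ρ hρ
    simp [slope, h0']
    ring
  have th : Tendsto h (𝓝[>] (0:ℝ)) (𝓝 1) := by
    have := (hd.continuous.tendsto 0).mono_left (nhdsWithin_le_nhds (s := Ioi (0:ℝ)))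
    rwa [h0] at this
  -- value of deriv h1 at 0
  have hc0 : deriv h1 0 = 1/(n:ℝ) := by
    have th2 : Tendsto (deriv h1) (𝓝[>] (0:ℝ)) (𝓝 (deriv h1 0)) :=
      ((hc1.continuous_deriv le_rfl).tendsto 0).mono_left nhdsWithin_le_nhds
    have tcomb : Tendsto (fun ρ => h ρ - ((n:ℝ)-1) * (h1 ρ / ρ)) (𝓝[>] (0:ℝ))
        (𝓝 (1 - ((n:ℝ)-1) * deriv h1 0)) := th.sub (t1.const_mul _)
    have th2' : Tendsto (deriv h1) (𝓝[>] (0:ℝ)) (𝓝 (1 - ((n:ℝ)-1) * deriv h1 0)) := by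
      refine tcomb.congr' ?_
      filter_upwards [self_mem_nhdsWithin] with ρ hρ
      rw [hode2 ρ hρ]; ring
    have := tendsto_nhds_unique th2 th2'
    field_simp
    linarith
  rw [hc0] at t1
  -- P > 0 near 0
  have hPnear : ∀ᶠ ρ in 𝓝[>] (0:ℝ), 0 < P ρ := by
    have th1 : Tendsto h1 (𝓝[>] (0:ℝ)) (𝓝 0) := by
      have := (hd1.continuous.tendsto 0).mono_left (nhdsWithin_le_nhds (s := Ioi (0:ℝ)))
      rwa [h0'] at this
    have tPq : Tendsto (fun ρ => P ρ / ρ) (𝓝[>] (0:ℝ)) (𝓝 (2/(n:ℝ))) := by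
      have tg : Tendsto (fun ρ => h1 ρ / h ρ) (𝓝[>] (0:ℝ)) (𝓝 0) := by
        have := th1.div th one_ne_zero
        exact (by simpa using this : Tendsto (h1 / h) (𝓝[>] (0:ℝ)) (𝓝 0))
      have tcomb : Tendsto (fun ρ => 1 - ((n:ℝ)-2) * (h1 ρ / ρ / h ρ) - (h1 ρ / h ρ)^2)
          (𝓝[>] (0:ℝ)) (𝓝 (1 - ((n:ℝ)-2) * (1/(n:ℝ)/1) - 0^2)) :=
        (tendsto_const_nhds.sub ((t1.div th one_ne_zero).const_mul _)).sub (tg.pow 2)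
      have : (1 - ((n:ℝ)-2) * (1/(n:ℝ)/1) - 0^2) = 2/(n:ℝ) := by field_simp; ring
      rw [this] at tcomb
      refine tcomb.congr' ?_
      filter_upwards [self_mem_nhdsWithin] with ρ hρ
      have hρ' : (ρ:ℝ) ≠ 0 := ne_of_gt hρ
      have hH := hne ρ hρ
      rw [hPdef]
      simp only [hgdef]
      rw [eq_div_iff hρ']
      field_simp
    have hev := tPq.eventually (eventually_gt_nhds (show (0:ℝ) < 2/(n:ℝ) by positivity))
    filter_upwards [hev, self_mem_nhdsWithin] with ρ h1' h2'
    have : 0 < P ρ / ρ * ρ := mul_pos h1' h2'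
    rwa [div_mul_cancel₀ _ (ne_of_gt h2')] at this
  -- P > 0 everywhere on (0, ∞)
  have hPpos : ∀ ρ : ℝ, 0 < ρ → 0 < P ρ := by
    by_contra hcon
    push_neg at hcon
    obtain ⟨ρ₁, hρ₁, hP₁⟩ := hcon
    obtain ⟨u, hu, huP⟩ := mem_nhdsGT_iff_exists_Ioo_subset.mp hPnear
    simp only [mem_Ioi] at hu
    set A : Set ℝ := {ρ | 0 < ρ ∧ P ρ ≤ 0} with hAdef
    have hAne : A.Nonempty := ⟨ρ₁, hρ₁, hP₁⟩
    have hAbd : BddBelow A := ⟨0, fun x hx => hx.1.le⟩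
    set ρ₀ := sInf A with hρ₀def
    have hulb : ∀ x ∈ A, u ≤ x := by
      intro x hx
      by_contra hlt
      push_neg at hlt
      exact absurd (huP ⟨hx.1, hlt⟩) (not_lt.mpr hx.2)
    have hρ₀u : u ≤ ρ₀ := le_csInf hAne hulb
    have hρ₀pos : 0 < ρ₀ := lt_of_lt_of_le hu hρ₀u
    have hcontP : ∀ ρ : ℝ, 0 < ρ → ContinuousAt P ρ :=
      fun ρ hρ => (hPder ρ hρ).continuousAt
    have hPρ₀le : P ρ₀ ≤ 0 := by
      obtain ⟨xs, hxs, hxlim⟩ := mem_closure_iff_seq_limit.mp (csInf_mem_closure hAne hAbd)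
      have : Tendsto (fun k => P (xs k)) atTop (𝓝 (P ρ₀)) :=
        ((hcontP ρ₀ hρ₀pos).tendsto).comp hxlim
      exact le_of_tendsto this (Eventually.of_forall (fun k => (hxs k).2))
    have hPposlt : ∀ ρ : ℝ, 0 < ρ → ρ < ρ₀ → 0 < P ρ := by
      intro ρ hρ hρlt
      by_contra hle
      push_neg at hle
      exact absurd (csInf_le hAbd ⟨hρ, hle⟩) (not_le.mpr hρlt)
    have hPρ₀ : P ρ₀ = 0 := by
      refine le_antisymm hPρ₀le ?_
      have hmem : Ioo (0:ℝ) ρ₀ ∈ 𝓝[<] ρ₀ := Ioo_mem_nhdsLT_of_mem ⟨hρ₀pos, le_rfl⟩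
      have tP : Tendsto P (𝓝[<] ρ₀) (𝓝 (P ρ₀)) :=
        ((hcontP ρ₀ hρ₀pos).tendsto).mono_left nhdsWithin_le_nhds
      refine ge_of_tendsto tP ?_
      filter_upwards [hmem] with ρ hρ
      exact (hPposlt ρ hρ.1 hρ.2).le
    have hder2 := hPzero ρ₀ hρ₀pos hPρ₀
    rw [hasDerivAt_iff_tendsto_slope] at hder2
    have hslope : Tendsto (slope P ρ₀) (𝓝[<] ρ₀) (𝓝 2) :=
      hder2.mono_left (nhdsWithin_mono _ (fun x (hx : x ∈ Iio ρ₀) => ne_of_lt hx))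
    have hev : ∀ᶠ ρ in 𝓝[<] ρ₀, slope P ρ₀ ρ ≤ 0 := by
      filter_upwards [Ioo_mem_nhdsLT_of_mem (show ρ₀ ∈ Ioc (0:ℝ) ρ₀ from ⟨hρ₀pos, le_rfl⟩)]
        with ρ hρ
      have hnum : 0 < P ρ := hPposlt ρ hρ.1 hρ.2
      have hden : ρ - ρ₀ < 0 := sub_neg.mpr hρ.2
      rw [slope_def_field, hPρ₀, sub_zero]
      exact (div_neg_of_pos_of_neg hnum hden).le
    have : (2:ℝ) ≤ 0 := le_of_tendsto hslope hev
    linarith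
  -- conclude
  apply strictMonoOn_of_deriv_pos (convex_Ioi 0)
  · intro ρ hρ
    exact ((hσder ρ hρ).continuousAt).continuousWithinAt
  · rw [interior_Ioi]
    intro ρ hρ
    rw [(hσder ρ hρ).deriv]
    exact mul_pos (by positivity) (hPpos ρ hρ)
end
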